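/- Let Ω be a uniform domain with admissible Whitney covering W, 0 < s < 1, 1 ≤ p < ∞, and f ∈ L¹_loc(Ω). Then the quantity ( Σ_{Q∈W} ∫_Q sup_{y∈Sh(Q)} |f(x)−f(y)|^p / |x−y|^{sp} dx )^{1/p} is comparable, with constants depending on d, s, p and the uniformity constants, to ( ∫_Ω (ess sup_{y∈Ω} |f(x)−f(y)| / |x−y|^{s})^p dx )^{1/p}. -/

import Mathlib

open MeasureTheory ENNReal

/-- An axis-parallel cube in `ℝ^d`, identified with the closed ball of radius `side/2`
around its center in the sup metric on `Fin d → ℝ`. -/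
structure Cube (d : ℕ) where
  center : Fin d → ℝ
  side : ℝ
  side_pos : 0 < side

/-- The set of points of a cube. -/
def Cube.toSet {d : ℕ} (Q : Cube d) : Set (Fin d → ℝ) :=
  Metric.closedBall Q.center (Q.side / 2)

/-- Distance between two sets. -/
noncomputable def setDist {d : ℕ} (A B : Set (Fin d → ℝ)) : ℝ :=
  sInf (Set.image2 dist A B)

/-- The long distance `D(Q,S) = ℓ(Q) + ℓ(S) + dist(Q,S)` between two cubes. -/
noncomputable def longDist {d : ℕ} (Q S : Cube d) : ℝ :=
  Q.side + S.side + setDist Q.toSet S.toSet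

/-- A Whitney covering of `Ω`: a family of essentially disjoint (dyadic-type) cubes whose
union is `Ω`, with side-lengths comparable to the distance to `∂Ω`, and finite
superposition of the dilated cubes `50Q`. -/
structure WhitneyCovering (d : ℕ) (Ω : Set (Fin d → ℝ)) where
  cubes : Set (Cube d)
  covers : (⋃ Q ∈ cubes, Q.toSet) = Ω
  essDisjoint : ∀ Q ∈ cubes, ∀ S ∈ cubes, Q ≠ S →
    interior Q.toSet ∩ interior S.toSet = ∅
  CW : ℝ
  one_le_CW : 1 ≤ CW
  dist_lb : ∀ Q ∈ cubes, CW * Q.side ≤ setDist Q.toSet (frontier Ω)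
  dist_ub : ∀ Q ∈ cubes, setDist Q.toSet (frontier Ω) ≤ 4 * CW * Q.side
  finiteOverlap : ∃ N : ℕ, ∀ x : Fin d → ℝ,
    {Q ∈ cubes | x ∈ Metric.closedBall Q.center (25 * Q.side)}.Finite ∧
    {Q ∈ cubes | x ∈ Metric.closedBall Q.center (25 * Q.side)}.ncard ≤ N

/-- `S ∈ SH_ρ(P)` : the cube `S` of the covering lies in the `ρ`-shadow of `P`, i.e.
`S ⊆ B(x_P, ρ ℓ(P))`. -/
def memShadow {d : ℕ} {Ω : Set (Fin d → ℝ)} (W : WhitneyCovering d Ω) (ρ : ℝ)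
    (S P : Cube d) : Prop :=
  S ∈ W.cubes ∧ P ∈ W.cubes ∧ S.toSet ⊆ Metric.closedBall P.center (ρ * P.side)

/-- An `ε`-admissible chain of Whitney cubes joining `Q` to `S`. -/
structure AdmissibleChain {d : ℕ} {Ω : Set (Fin d → ℝ)} (W : WhitneyCovering d Ω)
    (ε : ℝ) (Q S : Cube d) where
  M : ℕ
  M_pos : 0 < M
  c : Fin M → Cube d
  mem : ∀ j, c j ∈ W.cubes
  first : c ⟨0, M_pos⟩ = Q
  last : c ⟨M - 1, Nat.sub_lt M_pos Nat.one_pos⟩ = S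
  neighbors : ∀ (j : ℕ) (h : j + 1 < M),
    ((c ⟨j, Nat.lt_of_succ_lt h⟩).toSet ∩ (c ⟨j + 1, h⟩).toSet).Nonempty
  length_le : ∑ j, (c j).side ≤ ε⁻¹ * longDist Q S
  j₀ : Fin M
  growth₁ : ∀ j : Fin M, j ≤ j₀ → ε * longDist Q (c j) ≤ (c j).side
  growth₂ : ∀ j : Fin M, j₀ ≤ j → ε * longDist (c j) S ≤ (c j).side

/-- `Ω` (with Whitney covering `W`) is an `ε`-uniform domain: any two Whitney cubes are
joined by an `ε`-admissible chain. -/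
def IsUniformDomain {d : ℕ} {Ω : Set (Fin d → ℝ)} (W : WhitneyCovering d Ω) (ε : ℝ) : Prop :=
  ∀ Q ∈ W.cubes, ∀ S ∈ W.cubes, Nonempty (AdmissibleChain W ε Q S)

/-- The non-centered Hardy–Littlewood maximal function, taken over cubes
(closed balls in the sup metric on `Fin d → ℝ`) containing `x`. -/
noncomputable def maximal (d : ℕ) (g : (Fin d → ℝ) → ℝ≥0∞) (x : Fin d → ℝ) : ℝ≥0∞ :=
  ⨆ (c : Fin d → ℝ) (r : ℝ) (_ : 0 < r) (_ : x ∈ Metric.closedBall c r),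
    (∫⁻ y in Metric.closedBall c r, g y) / volume (Metric.closedBall c r)

/-- The realization `Sh_ρ(P)` of the `ρ`-shadow of `P`: the union of the Whitney cubes that
lie in the shadow of `P`. -/
def shadowSet {d : ℕ} {Ω : Set (Fin d → ℝ)} (W : WhitneyCovering d Ω) (ρ : ℝ)
    (P : Cube d) : Set (Fin d → ℝ) :=
  ⋃ S ∈ {S : Cube d | memShadow W ρ S P}, S.toSet

section StmtFifteenHelpers

open Metric Set MeasureTheory

variable {d : ℕ}

lemma Cube.center_mem (Q : Cube d) : Q.center ∈ Q.toSet :=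
  Metric.mem_closedBall_self (by have := Q.side_pos; linarith)

lemma Cube.toSet_nonempty (Q : Cube d) : Q.toSet.Nonempty := ⟨Q.center, Q.center_mem⟩

lemma Cube.measurableSet_toSet (Q : Cube d) : MeasurableSet Q.toSet :=
  measurableSet_closedBall

lemma Cube.dist_le_side {Q : Cube d} {x y : Fin d → ℝ} (hx : x ∈ Q.toSet) (hy : y ∈ Q.toSet) :
    dist x y ≤ Q.side := by
  have hx' : dist x Q.center ≤ Q.side / 2 := Metric.mem_closedBall.mp hx
  have hy' : dist y Q.center ≤ Q.side / 2 := Metric.mem_closedBall.mp hy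
  calc dist x y ≤ dist x Q.center + dist Q.center y := dist_triangle _ _ _
    _ ≤ Q.side / 2 + Q.side / 2 := by rw [dist_comm Q.center y]; linarith
    _ = Q.side := by ring

lemma Cube.volume_toSet (Q : Cube d) : volume Q.toSet = ENNReal.ofReal (Q.side ^ d) := by
  have h0 : (0:ℝ) ≤ Q.side / 2 := by have := Q.side_pos; linarith
  rw [Cube.toSet, Real.volume_pi_closedBall _ h0]
  congr 1
  rw [Fintype.card_fin]
  congr 1
  ring

lemma Cube.volume_ne_zero (Q : Cube d) : volume Q.toSet ≠ 0 := by
  rw [Q.volume_toSet]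
  simp only [ne_eq, ENNReal.ofReal_eq_zero, not_le]
  have := Q.side_pos
  positivity

lemma Cube.volume_ne_top (Q : Cube d) : volume Q.toSet ≠ ⊤ := by
  rw [Q.volume_toSet]; exact ENNReal.ofReal_ne_top

lemma Cube.toSet_ae_eq_interior (hd : 1 ≤ d) (Q : Cube d) :
    Q.toSet =ᵐ[volume] interior Q.toSet := by
  haveI : Nonempty (Fin d) := ⟨⟨0, hd⟩⟩
  haveI : Nontrivial (Fin d → ℝ) := Function.nontrivial
  have hr : Q.side / 2 ≠ 0 := by have := Q.side_pos; positivity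
  have hint : interior Q.toSet = Metric.ball Q.center (Q.side / 2) :=
    interior_closedBall _ hr
  rw [ae_eq_set, hint]
  constructor
  · have hsub : Metric.ball Q.center (Q.side / 2) ⊆ Q.toSet := Metric.ball_subset_closedBall
    have hvb : volume (Metric.ball Q.center (Q.side / 2)) = ENNReal.ofReal (Q.side ^ d) := by
      rw [Real.volume_pi_ball _ (by have := Q.side_pos; positivity)]
      congr 1
      rw [Fintype.card_fin]
      congr 1
      ring
    have := measure_diff hsub measurableSet_ball.nullMeasurableSet
      (by rw [hvb]; exact ENNReal.ofReal_ne_top)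
    rw [this, hvb, Q.volume_toSet, tsub_self]
  · rw [show Q.toSet = Metric.closedBall Q.center (Q.side/2) from rfl,
      Set.diff_eq_empty.mpr Metric.ball_subset_closedBall]
    exact measure_empty

lemma Cube.interior_disjoint_aux {Q S : Cube d}
    (h : interior Q.toSet ∩ interior S.toSet = ∅) :
    Disjoint (interior Q.toSet) (interior S.toSet) :=
  Set.disjoint_iff_inter_eq_empty.mpr h

lemma setDist_nonneg {A B : Set (Fin d → ℝ)} : 0 ≤ setDist A B :=
  Real.sInf_nonneg (by rintro x ⟨a, _, b, _, rfl⟩; exact dist_nonneg)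

lemma setDist_le_dist {A B : Set (Fin d → ℝ)} {a b : Fin d → ℝ} (ha : a ∈ A) (hb : b ∈ B) :
    setDist A B ≤ dist a b :=
  csInf_le ⟨0, by rintro x ⟨a', _, b', _, rfl⟩; exact dist_nonneg⟩
    (Set.mem_image2_of_mem ha hb)

lemma setDist_approx {A B : Set (Fin d → ℝ)} (hA : A.Nonempty) (hB : B.Nonempty)
    {δ : ℝ} (hδ : 0 < δ) : ∃ a ∈ A, ∃ b ∈ B, dist a b < setDist A B + δ := by
  obtain ⟨x, hx, hlt⟩ := Real.lt_sInf_add_pos (hA.image2 (f := dist) hB) hδ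
  obtain ⟨a, ha, b, hb, rfl⟩ := hx
  exact ⟨a, ha, b, hb, hlt⟩

lemma setDist_comm {A B : Set (Fin d → ℝ)} : setDist A B = setDist B A := by
  unfold setDist
  congr 1
  rw [← Set.image2_swap]
  simp [dist_comm]

lemma longDist_comm (Q S : Cube d) : longDist Q S = longDist S Q := by
  unfold longDist
  rw [setDist_comm]
  ring

lemma le_longDist (Q S : Cube d) : Q.side + S.side ≤ longDist Q S := by
  have := setDist_nonneg (A := Q.toSet) (B := S.toSet)
  unfold longDist; linarith

lemma longDist_pos (Q S : Cube d) : 0 < longDist Q S := by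
  have h1 := Q.side_pos; have h2 := S.side_pos
  have := le_longDist Q S; linarith

lemma longDist_le {Q S : Cube d} {x y : Fin d → ℝ} (hx : x ∈ Q.toSet) (hy : y ∈ S.toSet) :
    longDist Q S ≤ Q.side + S.side + dist x y := by
  have := setDist_le_dist hx hy
  unfold longDist; linarith

/-- If `longDist Q R ≤ ε⁻¹ ℓ(R)` then `Q ⊆ B(x_R, ε⁻¹ ℓ(R))`. -/
lemma subset_ball_of_longDist {ε : ℝ} (hε : 0 < ε⁻¹) {Q R : Cube d}
    (h : longDist Q R ≤ ε⁻¹ * R.side) :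
    Q.toSet ⊆ Metric.closedBall R.center (ε⁻¹ * R.side) := by
  intro w hw
  rw [Metric.mem_closedBall]
  refine le_of_forall_pos_le_add (fun δ hδ => ?_)
  obtain ⟨q, hq, r, hr, hqr⟩ := setDist_approx Q.toSet_nonempty R.toSet_nonempty hδ
  have h1 : dist w q ≤ Q.side := Cube.dist_le_side hw hq
  have h2 : dist r R.center ≤ R.side / 2 := Metric.mem_closedBall.mp hr
  have h3 : dist w R.center ≤ dist w q + dist q r + dist r R.center := dist_triangle4 _ _ _ _
  have h4 : 0 < R.side := R.side_pos
  have hL : Q.side + R.side + setDist Q.toSet R.toSet ≤ ε⁻¹ * R.side := h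
  linarith

end StmtFifteenHelpers
section StmtFifteenHelpers2

open Metric Set MeasureTheory

variable {d : ℕ} {Ω : Set (Fin d → ℝ)}

lemma WhitneyCovering.cube_subset (W : WhitneyCovering d Ω) {Q : Cube d}
    (hQ : Q ∈ W.cubes) : Q.toSet ⊆ Ω := by
  rw [← W.covers]
  exact Set.subset_biUnion_of_mem hQ

lemma shadowSet_subset (W : WhitneyCovering d Ω) (ρ : ℝ) (P : Cube d) :
    shadowSet W ρ P ⊆ Ω :=
  Set.iUnion₂_subset fun S hS => W.cube_subset hS.1

lemma subset_shadowSet (W : WhitneyCovering d Ω) {ρ : ℝ} {S P : Cube d}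
    (h : memShadow W ρ S P) : S.toSet ⊆ shadowSet W ρ P :=
  Set.subset_biUnion_of_mem (show S ∈ {S : Cube d | memShadow W ρ S P} from h)

lemma WhitneyCovering.cubes_countable (W : WhitneyCovering d Ω) : W.cubes.Countable := by
  refine Set.PairwiseDisjoint.countable_of_isOpen
    (s := fun Q : Cube d => interior Q.toSet) (a := W.cubes) ?_ ?_ ?_
  · intro Q hQ S hS hne
    exact Cube.interior_disjoint_aux (W.essDisjoint Q hQ S hS hne)
  · intro Q _; exact isOpen_interior
  · intro Q _
    refine ⟨Q.center, ?_⟩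
    have : Q.center ∈ Metric.ball Q.center (Q.side / 2) :=
      Metric.mem_ball_self (by have := Q.side_pos; linarith)
    exact Metric.ball_subset_interior_closedBall this

lemma frontier_nonempty_of_open (hd : 1 ≤ d) (hopen : IsOpen Ω) (hne : Ω.Nonempty)
    (huniv : Ω ≠ Set.univ) : (frontier Ω).Nonempty := by
  haveI : PreconnectedSpace (Fin d → ℝ) := ⟨by simpa using convex_univ.isPreconnected⟩
  by_contra h
  rw [Set.not_nonempty_iff_eq_empty] at h
  have hfr : closure Ω \ Ω = ∅ := by
    have : frontier Ω = closure Ω \ Ω := by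
      rw [frontier, hopen.interior_eq]
    rw [← this, h]
  have hcl : IsClosed Ω := isClosed_of_closure_subset (Set.diff_eq_empty.mp hfr)
  rcases isClopen_iff.mp ⟨hcl, hopen⟩ with h' | h'
  · exact hne.ne_empty h'
  · exact huniv h'

/-- Whitney size control : `ℓ(S) ≤ 5 ℓ(Q) + dist x y` for `x ∈ Q`, `y ∈ S`. -/
lemma side_le_of_whitney (W : WhitneyCovering d Ω) {Q S : Cube d}
    (hQ : Q ∈ W.cubes) (hS : S ∈ W.cubes) (hfr : (frontier Ω).Nonempty)
    {x y : Fin d → ℝ} (hx : x ∈ Q.toSet) (hy : y ∈ S.toSet) :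
    S.side ≤ 5 * Q.side + dist x y := by
  have hCW := W.one_le_CW
  have hCW0 : (0:ℝ) < W.CW := by linarith
  refine le_of_forall_pos_le_add (fun δ hδ => ?_)
  obtain ⟨q, hq, w, hw, hqw⟩ := setDist_approx Q.toSet_nonempty hfr
    (mul_pos hCW0 hδ)
  have h1 : dist q w < 4 * W.CW * Q.side + W.CW * δ := by
    have := W.dist_ub Q hQ
    linarith
  have h2 : W.CW * S.side ≤ setDist S.toSet (frontier Ω) := W.dist_lb S hS
  have h3 : setDist S.toSet (frontier Ω) ≤ dist y w := setDist_le_dist hy hw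
  have h4 : dist y w ≤ dist y x + dist x q + dist q w := dist_triangle4 _ _ _ _
  have h5 : dist x q ≤ Q.side := Cube.dist_le_side hx hq
  have h6 : dist y x = dist x y := dist_comm _ _
  have hQpos := Q.side_pos
  have hd0 : 0 ≤ dist x y := dist_nonneg
  -- CW * S.side ≤ dist x y + Q.side + 4 CW Q.side + CW δ
  have key : W.CW * S.side ≤ dist x y + Q.side + 4 * W.CW * Q.side + W.CW * δ := by
    linarith
  -- divide by CW ≥ 1
  by_contra hcon
  push_neg at hcon
  have hc1 : 0 < W.CW * (S.side - (5 * Q.side + dist x y + δ)) :=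
    mul_pos hCW0 (by linarith)
  have hc2 : 0 ≤ (W.CW - 1) * dist x y := mul_nonneg (by linarith) hd0
  have hc3 : 0 ≤ (W.CW - 1) * Q.side := mul_nonneg (by linarith) hQpos.le
  nlinarith [key, hc1, hc2, hc3]

end StmtFifteenHelpers2
section StmtFifteenHelpers3

open Metric Set MeasureTheory

variable {d : ℕ} {Ω : Set (Fin d → ℝ)}

/-- Existence of a "peak" cube for a pair of Whitney cubes in a uniform domain. -/
lemma exists_peak {W : WhitneyCovering d Ω} {ε : ℝ} (hU : IsUniformDomain W ε)
    {Q S : Cube d} (hQ : Q ∈ W.cubes) (hS : S ∈ W.cubes) :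
    ∃ R ∈ W.cubes, ε * longDist Q R ≤ R.side ∧ ε * longDist R S ≤ R.side ∧
      R.side ≤ ε⁻¹ * longDist Q S := by
  obtain ⟨ch⟩ := hU Q hQ S hS
  refine ⟨ch.c ch.j₀, ch.mem _, ch.growth₁ _ le_rfl, ch.growth₂ _ le_rfl, ?_⟩
  calc (ch.c ch.j₀).side ≤ ∑ j, (ch.c j).side :=
        Finset.single_le_sum (fun j _ => (ch.c j).side_pos.le) (Finset.mem_univ _)
    _ ≤ ε⁻¹ * longDist Q S := ch.length_le

lemma ennreal_le_mul_of_div_le {a b c : ℝ≥0∞} (hb0 : b ≠ 0) (hbt : b ≠ ⊤)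
    (h : a / b ≤ c) : a ≤ c * b := by
  have := mul_le_mul_left h b
  rwa [ENNReal.div_mul_cancel hb0 hbt] at this

lemma ennreal_div_le_of_le_mul {a b c : ℝ≥0∞} (hb0 : b ≠ 0) (hbt : b ≠ ⊤)
    (h : a ≤ c * b) : a / b ≤ c := (ENNReal.div_le_iff hb0 hbt).mpr h

lemma ennreal_add_rpow_le {p : ℝ} (hp : 0 ≤ p) (u v : ℝ≥0∞) :
    (u + v) ^ p ≤ 2 ^ p * (u ^ p + v ^ p) := by
  rcases le_total u v with h | h
  · calc (u + v) ^ p ≤ (2 * v) ^ p := by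
          apply ENNReal.rpow_le_rpow _ hp
          rw [two_mul]; exact add_le_add_left h v
      _ = 2 ^ p * v ^ p := ENNReal.mul_rpow_of_nonneg _ _ hp
      _ ≤ 2 ^ p * (u ^ p + v ^ p) := mul_le_mul_right le_add_self _
  · calc (u + v) ^ p ≤ (2 * u) ^ p := by
          apply ENNReal.rpow_le_rpow _ hp
          rw [two_mul]; exact add_le_add_right h u
      _ = 2 ^ p * u ^ p := ENNReal.mul_rpow_of_nonneg _ _ hp
      _ ≤ 2 ^ p * (u ^ p + v ^ p) := mul_le_mul_right le_self_add _

/-- Combine marginal a.e. statements into a product a.e. statement. -/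
lemma ae_prod_of_marginals {α β : Type*} [MeasurableSpace α] [MeasurableSpace β]
    (μ : Measure α) (ν : Measure β) [SFinite ν] {P1 : α → Prop} {P2 : β → Prop}
    (h1 : ∀ᵐ x ∂μ, P1 x) (h2 : ∀ᵐ y ∂ν, P2 y) :
    ∀ᵐ w ∂(μ.prod ν), P1 w.1 ∧ P2 w.2 := by
  rw [Filter.eventually_and]
  constructor
  · rw [ae_iff] at h1 ⊢
    refine measure_mono_null (t := (toMeasurable μ {x | ¬ P1 x}) ×ˢ (Set.univ : Set β))
      (fun w hw => ⟨subset_toMeasurable _ _ hw, trivial⟩) ?_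
    rw [Measure.prod_prod, measure_toMeasurable, h1, zero_mul]
  · rw [ae_iff] at h2 ⊢
    refine measure_mono_null (t := (Set.univ : Set α) ×ˢ (toMeasurable ν {y | ¬ P2 y}))
      (fun w hw => ⟨trivial, subset_toMeasurable _ _ hw⟩) ?_
    rw [Measure.prod_prod, measure_toMeasurable, h2, mul_zero]

/-- Splitting the domain integral along (interiors of) the Whitney cubes. -/
lemma lintegral_domain_le_tsum (W : WhitneyCovering d Ω) (hopen : IsOpen Ω)
    (h : (Fin d → ℝ) → ℝ≥0∞) :
    haveI : Countable {Q : Cube d // Q ∈ W.cubes} := W.cubes_countable.to_subtype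
    ∫⁻ x in Ω, h x ≤ ∑' Q : {Q : Cube d // Q ∈ W.cubes}, ∫⁻ x in (Q : Cube d).toSet, h x := by
  haveI : Countable {Q : Cube d // Q ∈ W.cubes} := W.cubes_countable.to_subtype
  have hΩ : Ω = ⋃ Q : {Q : Cube d // Q ∈ W.cubes}, (Q : Cube d).toSet := by
    exact ((Set.biUnion_eq_iUnion _ _).symm.trans W.covers).symm
  calc ∫⁻ x in Ω, h x
      = ∫⁻ x, h x ∂(volume.restrict (⋃ Q : {Q : Cube d // Q ∈ W.cubes}, (Q : Cube d).toSet)) := by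
        rw [← hΩ]
    _ ≤ ∫⁻ x, h x ∂(Measure.sum fun Q : {Q : Cube d // Q ∈ W.cubes} =>
          volume.restrict (Q : Cube d).toSet) :=
        lintegral_mono' Measure.restrict_iUnion_le le_rfl
    _ = ∑' Q : {Q : Cube d // Q ∈ W.cubes}, ∫⁻ x in (Q : Cube d).toSet, h x :=
        lintegral_sum_measure _ _

lemma tsum_le_lintegral_domain (hd : 1 ≤ d) (W : WhitneyCovering d Ω)
    (h : (Fin d → ℝ) → ℝ≥0∞) :
    haveI : Countable {Q : Cube d // Q ∈ W.cubes} := W.cubes_countable.to_subtype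
    ∑' Q : {Q : Cube d // Q ∈ W.cubes}, ∫⁻ x in (Q : Cube d).toSet, h x ≤ ∫⁻ x in Ω, h x := by
  haveI : Countable {Q : Cube d // Q ∈ W.cubes} := W.cubes_countable.to_subtype
  have hdisj : Pairwise (Function.onFun Disjoint fun Q : {Q : Cube d // Q ∈ W.cubes} =>
      interior (Q : Cube d).toSet) := by
    intro i j hij
    exact Cube.interior_disjoint_aux
      (W.essDisjoint _ i.2 _ j.2 (fun hc => hij (Subtype.ext hc)))
  have hmeas : ∀ Q : {Q : Cube d // Q ∈ W.cubes}, MeasurableSet (interior (Q : Cube d).toSet) :=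
    fun Q => isOpen_interior.measurableSet
  calc ∑' Q : {Q : Cube d // Q ∈ W.cubes}, ∫⁻ x in (Q : Cube d).toSet, h x
      = ∑' Q : {Q : Cube d // Q ∈ W.cubes}, ∫⁻ x in interior (Q : Cube d).toSet, h x := by
        congr 1
        funext Q
        rw [Measure.restrict_congr_set (Cube.toSet_ae_eq_interior hd _)]
    _ = ∫⁻ x, h x ∂(Measure.sum fun Q : {Q : Cube d // Q ∈ W.cubes} =>
          volume.restrict (interior (Q : Cube d).toSet)) := (lintegral_sum_measure _ _).symm
    _ = ∫⁻ x, h x ∂(volume.restrict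
          (⋃ Q : {Q : Cube d // Q ∈ W.cubes}, interior (Q : Cube d).toSet)) := by
        rw [Measure.restrict_iUnion hdisj hmeas]
    _ ≤ ∫⁻ x in Ω, h x := by
        refine lintegral_mono' (Measure.restrict_mono ?_ le_rfl) le_rfl
        refine Set.iUnion_subset fun Q => ?_
        exact (interior_subset).trans (W.cube_subset Q.2)

end StmtFifteenHelpers3
section StmtFifteenHelpers4

open Metric Set MeasureTheory

variable {d : ℕ} {Ω : Set (Fin d → ℝ)}

/-- The key estimate: if `S` is not inside the `ρ`-shadow ball of `Q`, then the `(Q,S)`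
essential supremum is controlled by the average over a "peak" cube `R` of the chain. -/
lemma far_pair_bound (hd : 1 ≤ d) {ε s p : ℝ} (hε : 0 < ε) (hs0 : 0 < s) (hp : 1 ≤ p)
    (hopen : IsOpen Ω) (W : WhitneyCovering d Ω) (hU : IsUniformDomain W ε)
    (hfr : (frontier Ω).Nonempty) (f : (Fin d → ℝ) → ℝ)
    {Q S : Cube d} (hQ : Q ∈ W.cubes) (hS : S ∈ W.cubes)
    (hsub : ¬ S.toSet ⊆ Metric.closedBall Q.center ((ε⁻¹ + 9) * Q.side)) :
    ∃ R ∈ W.cubes, longDist Q R ≤ ε⁻¹ * R.side ∧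
      ∀ᵐ x ∂(volume.restrict Q.toSet),
        essSup (fun y => (‖f x - f y‖₊ : ℝ≥0∞) ^ p / edist x y ^ (s * p))
            (volume.restrict S.toSet) ≤
          (2 ^ (p+1) * ENNReal.ofReal ((ε⁻¹ + 1) * (13 * ε⁻¹)) ^ (s * p)) *
            ((∫⁻ z in R.toSet,
              essSup (fun y => (‖f z - f y‖₊ : ℝ≥0∞) ^ p / edist z y ^ (s * p))
                (volume.restrict (shadowSet W (ε⁻¹ + 9) R))) / volume R.toSet) := by
  have hinv : (0:ℝ) < ε⁻¹ := inv_pos.mpr hε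
  have hp0 : (0:ℝ) < p := lt_of_lt_of_le one_pos hp
  have hsp0 : (0:ℝ) ≤ s * p := le_of_lt (mul_pos hs0 hp0)
  set ρ : ℝ := ε⁻¹ + 9 with hρdef
  -- Step 1 : distance lower bound
  have hd13 : ∀ x ∈ Q.toSet, ∀ y ∈ S.toSet, longDist Q S ≤ 13 * dist x y := by
    intro x hx y hy
    have hsize : S.side ≤ 5 * Q.side + dist x y := side_le_of_whitney W hQ hS hfr hx hy
    have hsd : setDist Q.toSet S.toSet ≤ dist x y := setDist_le_dist hx hy
    have hQpos := Q.side_pos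
    have hSpos := S.side_pos
    by_cases hbig : 6 * Q.side ≤ S.side
    · unfold longDist; linarith
    · push_neg at hbig
      obtain ⟨w, hwS, hwB⟩ := Set.not_subset.mp hsub
      rw [Metric.mem_closedBall, not_le] at hwB
      have h1 : dist w y ≤ S.side := Cube.dist_le_side hwS hy
      have h2 : dist x Q.center ≤ Q.side / 2 := Metric.mem_closedBall.mp hx
      have h3 : dist w Q.center ≤ dist w y + dist y x + dist x Q.center :=
        dist_triangle4 _ _ _ _
      have h4 : dist y x = dist x y := dist_comm _ _
      rw [hρdef] at hwB
      have hexp : (ε⁻¹ + 9) * Q.side = ε⁻¹ * Q.side + 9 * Q.side := by ring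
      have hnn : 0 ≤ ε⁻¹ * Q.side := mul_nonneg hinv.le hQpos.le
      -- dist x y ≥ (ε⁻¹ + 2.5) Q.side ≥ 2.5 Q.side
      have h5 : (5/2 : ℝ) * Q.side ≤ dist x y := by linarith
      unfold longDist; linarith
  -- Step 2 : the peak cube
  obtain ⟨R, hR, hg1, hg2, hlen⟩ := exists_peak hU hQ hS
  have hQR : longDist Q R ≤ ε⁻¹ * R.side := by
    rw [inv_mul_eq_div, le_div_iff₀ hε, mul_comm]; exact hg1
  have hSR : longDist S R ≤ ε⁻¹ * R.side := by
    rw [longDist_comm, inv_mul_eq_div, le_div_iff₀ hε, mul_comm]; exact hg2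
  have hQball : Q.toSet ⊆ Metric.closedBall R.center (ε⁻¹ * R.side) :=
    subset_ball_of_longDist hinv hQR
  have hSball : S.toSet ⊆ Metric.closedBall R.center (ε⁻¹ * R.side) :=
    subset_ball_of_longDist hinv hSR
  have hρ' : ε⁻¹ * R.side ≤ ρ * R.side :=
    mul_le_mul_of_nonneg_right (by rw [hρdef]; linarith) R.side_pos.le
  have hQsh : Q.toSet ⊆ shadowSet W ρ R :=
    subset_shadowSet W ⟨hQ, hR, hQball.trans (Metric.closedBall_subset_closedBall hρ')⟩
  have hSsh : S.toSet ⊆ shadowSet W ρ R :=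
    subset_shadowSet W ⟨hS, hR, hSball.trans (Metric.closedBall_subset_closedBall hρ')⟩
  refine ⟨R, hR, hQR, ?_⟩
  -- notation
  set SH : Set (Fin d → ℝ) := shadowSet W ρ R with hSH
  set GR : (Fin d → ℝ) → ℝ≥0∞ := fun z =>
    essSup (fun y => (‖f z - f y‖₊ : ℝ≥0∞) ^ p / edist z y ^ (s * p))
      (volume.restrict SH) with hGR
  set κ₁ : ℝ≥0∞ := ENNReal.ofReal ((ε⁻¹ + 1) * (13 * ε⁻¹)) ^ (s * p) with hκ₁
  set μQ := volume.restrict Q.toSet with hμQ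
  set μS := volume.restrict S.toSet with hμS
  set Φ : (Fin d → ℝ) × (Fin d → ℝ) → ℝ≥0∞ := fun w =>
    (‖f w.1 - f w.2‖₊ : ℝ≥0∞) ^ p / edist w.1 w.2 ^ (s * p) with hΦ
  -- Step 3 : the per-z a.e. estimate
  have hz_ae : ∀ z : Fin d → ℝ, ∀ᵐ y ∂(volume.restrict SH),
      edist (f z) (f y) ^ p ≤ GR z * edist z y ^ (s * p) := by
    intro z
    filter_upwards [ENNReal.ae_le_essSup
      (fun y => (‖f z - f y‖₊ : ℝ≥0∞) ^ p / edist z y ^ (s * p))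
      (μ := volume.restrict SH)] with y hy
    rw [show ((‖f z - f y‖₊ : ℝ≥0∞)) = edist (f z) (f y)
      from (edist_eq_enorm_sub _ _).symm] at hy
    by_cases hzy : edist z y = 0
    · have hzy' : z = y := edist_eq_zero.mp hzy
      subst hzy'
      simp only [edist_self, ENNReal.zero_rpow_of_pos hp0]
      exact zero_le
    · have hb0 : edist z y ^ (s * p) ≠ 0 :=
        (ENNReal.rpow_pos (pos_iff_ne_zero.mpr hzy) (edist_ne_top _ _)).ne'
      have hbt : edist z y ^ (s * p) ≠ ⊤ :=
        ENNReal.rpow_ne_top_of_nonneg hsp0 (edist_ne_top _ _)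
      exact ennreal_le_mul_of_div_le hb0 hbt hy
  -- Step 4 : bound on the product essSup, for z ∈ R
  have hMz : ∀ z ∈ R.toSet, essSup Φ (μQ.prod μS) ≤ (2 ^ (p+1) * κ₁) * GR z := by
    intro z hz
    have hxae : ∀ᵐ x ∂μQ,
        (edist (f z) (f x) ^ p ≤ GR z * edist z x ^ (s * p)) ∧ x ∈ Q.toSet :=
      ((hz_ae z).filter_mono (ae_mono (Measure.restrict_mono hQsh le_rfl))).and
        (ae_restrict_mem Q.measurableSet_toSet)
    have hyae : ∀ᵐ y ∂μS,
        (edist (f z) (f y) ^ p ≤ GR z * edist z y ^ (s * p)) ∧ y ∈ S.toSet :=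
      ((hz_ae z).filter_mono (ae_mono (Measure.restrict_mono hSsh le_rfl))).and
        (ae_restrict_mem S.measurableSet_toSet)
    refine essSup_le_of_ae_le _ ?_
    filter_upwards [ae_prod_of_marginals μQ μS hxae hyae] with w hw
    obtain ⟨⟨hwx, hxQ⟩, hwy, hyS⟩ := hw
    have hdxy : longDist Q S ≤ 13 * dist w.1 w.2 := hd13 _ hxQ _ hyS
    have hLpos := longDist_pos Q S
    have hxy_pos : 0 < dist w.1 w.2 := by linarith
    have hzc : dist z R.center ≤ R.side / 2 := Metric.mem_closedBall.mp hz
    have hRpos := R.side_pos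
    -- real geometry
    have hgeo : ∀ v : Fin d → ℝ, v ∈ Metric.closedBall R.center (ε⁻¹ * R.side) →
        dist z v ≤ ((ε⁻¹ + 1) * (13 * ε⁻¹)) * dist w.1 w.2 := by
      intro v hv
      rw [Metric.mem_closedBall] at hv
      have h1 : dist z v ≤ dist z R.center + dist R.center v := dist_triangle _ _ _
      have h2 : dist R.center v = dist v R.center := dist_comm _ _
      have h3 : R.side ≤ ε⁻¹ * (13 * dist w.1 w.2) := by
        refine hlen.trans ?_
        exact mul_le_mul_of_nonneg_left hdxy hinv.le
      nlinarith
    -- ENNReal versions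
    have hE : ∀ v : Fin d → ℝ, v ∈ Metric.closedBall R.center (ε⁻¹ * R.side) →
        edist z v ^ (s * p) ≤ κ₁ * edist w.1 w.2 ^ (s * p) := by
      intro v hv
      have h1 : edist z v ≤ ENNReal.ofReal ((ε⁻¹ + 1) * (13 * ε⁻¹)) * edist w.1 w.2 := by
        rw [edist_dist, edist_dist, ← ENNReal.ofReal_mul (by positivity)]
        exact ENNReal.ofReal_le_ofReal (hgeo v hv)
      calc edist z v ^ (s * p)
          ≤ (ENNReal.ofReal ((ε⁻¹ + 1) * (13 * ε⁻¹)) * edist w.1 w.2) ^ (s * p) :=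
            ENNReal.rpow_le_rpow h1 hsp0
        _ = κ₁ * edist w.1 w.2 ^ (s * p) := ENNReal.mul_rpow_of_nonneg _ _ hsp0
    have hb0 : edist w.1 w.2 ^ (s * p) ≠ 0 := by
      have : edist w.1 w.2 ≠ 0 := by
        rw [edist_dist]
        simp only [ne_eq, ENNReal.ofReal_eq_zero, not_le]
        exact hxy_pos
      exact (ENNReal.rpow_pos (pos_iff_ne_zero.mpr this) (edist_ne_top _ _)).ne'
    have hbt : edist w.1 w.2 ^ (s * p) ≠ ⊤ :=
      ENNReal.rpow_ne_top_of_nonneg hsp0 (edist_ne_top _ _)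
    -- numerator estimate
    have hnum : edist (f w.1) (f w.2) ^ p ≤
        ((2 ^ (p+1) * κ₁) * GR z) * edist w.1 w.2 ^ (s * p) := by
      have htri : edist (f w.1) (f w.2) ≤ edist (f z) (f w.1) + edist (f z) (f w.2) := by
        rw [edist_comm (f z) (f w.1)]
        exact edist_triangle _ _ _
      calc edist (f w.1) (f w.2) ^ p
          ≤ (edist (f z) (f w.1) + edist (f z) (f w.2)) ^ p :=
            ENNReal.rpow_le_rpow htri hp0.le
        _ ≤ 2 ^ p * (edist (f z) (f w.1) ^ p + edist (f z) (f w.2) ^ p) :=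
            ennreal_add_rpow_le hp0.le _ _
        _ ≤ 2 ^ p * ((GR z * edist z w.1 ^ (s * p)) + (GR z * edist z w.2 ^ (s * p))) := by
            gcongr
        _ ≤ 2 ^ p * ((GR z * (κ₁ * edist w.1 w.2 ^ (s * p)))
              + (GR z * (κ₁ * edist w.1 w.2 ^ (s * p)))) := by
            gcongr
            · exact hE w.1 (hQball hxQ)
            · exact hE w.2 (hSball hyS)
        _ = ((2 ^ (p+1) * κ₁) * GR z) * edist w.1 w.2 ^ (s * p) := by
            rw [ENNReal.rpow_add _ _ (by norm_num) (by norm_num), ENNReal.rpow_one]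
            ring
    have : Φ w = edist (f w.1) (f w.2) ^ p / edist w.1 w.2 ^ (s * p) := by
      rw [hΦ]
      simp only []
      rw [show ((‖f w.1 - f w.2‖₊ : ℝ≥0∞)) = edist (f w.1) (f w.2)
        from (edist_eq_enorm_sub _ _).symm]
    rw [this]
    exact ennreal_div_le_of_le_mul hb0 hbt hnum
  -- Step 5 : integrate over z ∈ R
  have hM_int : essSup Φ (μQ.prod μS) ≤
      (2 ^ (p+1) * κ₁) * ((∫⁻ z in R.toSet, GR z) / volume R.toSet) := by
    have hfin : (2:ℝ≥0∞) ^ (p+1) * κ₁ ≠ ⊤ := by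
      refine ENNReal.mul_ne_top ?_ ?_
      · exact ENNReal.rpow_ne_top_of_nonneg (by linarith) (by norm_num)
      · exact ENNReal.rpow_ne_top_of_nonneg hsp0 ENNReal.ofReal_ne_top
    have h1 : essSup Φ (μQ.prod μS) * volume R.toSet ≤
        (2 ^ (p+1) * κ₁) * ∫⁻ z in R.toSet, GR z := by
      calc essSup Φ (μQ.prod μS) * volume R.toSet
          = ∫⁻ _ in R.toSet, essSup Φ (μQ.prod μS) := (setLIntegral_const _ _).symm
        _ ≤ ∫⁻ z in R.toSet, (2 ^ (p+1) * κ₁) * GR z := by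
            refine lintegral_mono_ae ?_
            exact ae_restrict_of_forall_mem R.measurableSet_toSet hMz
        _ = (2 ^ (p+1) * κ₁) * ∫⁻ z in R.toSet, GR z :=
            lintegral_const_mul' _ _ hfin
    calc essSup Φ (μQ.prod μS)
        ≤ ((2 ^ (p+1) * κ₁) * ∫⁻ z in R.toSet, GR z) / volume R.toSet := by
          rw [ENNReal.le_div_iff_mul_le (Or.inl R.volume_ne_zero) (Or.inl R.volume_ne_top)]
          exact h1
      _ = _ := by rw [mul_div_assoc]
  -- Step 6 : pass to a.e. x
  have hae := Measure.ae_ae_of_ae_prod (μ := μQ) (ν := μS)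
    (ENNReal.ae_le_essSup Φ (μ := μQ.prod μS))
  filter_upwards [hae] with x hx
  refine le_trans (essSup_le_of_ae_le _ ?_) (le_trans hM_int le_rfl)
  filter_upwards [hx] with y hy
  exact hy

end StmtFifteenHelpers4
section StmtFifteenHelpers5

open Metric Set MeasureTheory

variable {d : ℕ} {Ω : Set (Fin d → ℝ)}

lemma essSup_restrict_domain_le (W : WhitneyCovering d Ω) (hopen : IsOpen Ω)
    (g : (Fin d → ℝ) → ℝ≥0∞) {c : ℝ≥0∞}
    (hc : ∀ i : {Q : Cube d // Q ∈ W.cubes},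
      essSup g (volume.restrict (i : Cube d).toSet) ≤ c) :
    essSup g (volume.restrict Ω) ≤ c := by
  haveI : Countable {Q : Cube d // Q ∈ W.cubes} := W.cubes_countable.to_subtype
  refine essSup_le_of_ae_le _ ?_
  rw [Filter.EventuallyLE, ae_iff]
  rw [Measure.restrict_apply' hopen.measurableSet]
  have hΩ : Ω = ⋃ i : {Q : Cube d // Q ∈ W.cubes}, (i : Cube d).toSet :=
    ((Set.biUnion_eq_iUnion _ _).symm.trans W.covers).symm
  rw [hΩ, Set.inter_iUnion]
  refine measure_iUnion_null fun i => ?_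
  have h0 : ∀ᵐ a ∂(volume.restrict (i : Cube d).toSet), g a ≤ c :=
    (ENNReal.ae_le_essSup g).mono fun a ha => ha.trans (hc i)
  have h1 := ae_iff.mp h0
  rwa [Measure.restrict_apply' (i : Cube d).measurableSet_toSet] at h1

lemma whitney_counting (hd : 1 ≤ d) (W : WhitneyCovering d Ω) {ε : ℝ} (hinv : 0 < ε⁻¹)
    (R : Cube d) :
    haveI : Countable {Q : Cube d // Q ∈ W.cubes} := W.cubes_countable.to_subtype
    (∑' i : {Q : Cube d // Q ∈ W.cubes},
      if longDist (i : Cube d) R ≤ ε⁻¹ * R.side then volume (i : Cube d).toSet else 0)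
      ≤ ENNReal.ofReal ((2 * ε⁻¹) ^ d) * volume R.toSet := by
  haveI : Countable {Q : Cube d // Q ∈ W.cubes} := W.cubes_countable.to_subtype
  classical
  set t : {Q : Cube d // Q ∈ W.cubes} → Set (Fin d → ℝ) := fun i =>
    if longDist (i : Cube d) R ≤ ε⁻¹ * R.side then interior (i : Cube d).toSet else ∅ with ht
  have hdisj : Pairwise (Function.onFun Disjoint t) := by
    intro i j hij
    simp only [ht, Function.onFun]
    split_ifs
    · exact Cube.interior_disjoint_aux
        (W.essDisjoint _ i.2 _ j.2 fun hc => hij (Subtype.ext hc))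
    · exact Set.disjoint_empty _
    · exact Set.empty_disjoint _
    · exact Set.empty_disjoint _
  have hmeas : ∀ i, MeasurableSet (t i) := by
    intro i
    simp only [ht]
    split_ifs
    · exact isOpen_interior.measurableSet
    · exact MeasurableSet.empty
  have hsub : ∀ i, t i ⊆ Metric.closedBall R.center (ε⁻¹ * R.side) := by
    intro i
    simp only [ht]
    split_ifs with h
    · exact interior_subset.trans (subset_ball_of_longDist hinv h)
    · exact Set.empty_subset _
  have hRpos := R.side_pos
  calc (∑' i : {Q : Cube d // Q ∈ W.cubes},
      if longDist (i : Cube d) R ≤ ε⁻¹ * R.side then volume (i : Cube d).toSet else 0)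
      = ∑' i, volume (t i) := by
        congr 1
        funext i
        simp only [ht]
        split_ifs with h
        · exact measure_congr (Cube.toSet_ae_eq_interior hd _)
        · simp
    _ = volume (⋃ i, t i) := (measure_iUnion hdisj hmeas).symm
    _ ≤ volume (Metric.closedBall R.center (ε⁻¹ * R.side)) :=
        measure_mono (Set.iUnion_subset hsub)
    _ ≤ ENNReal.ofReal ((2 * ε⁻¹) ^ d) * volume R.toSet := by
        rw [Real.volume_pi_closedBall _ (by positivity), R.volume_toSet,
          ← ENNReal.ofReal_mul (by positivity), Fintype.card_fin]
        exact ENNReal.ofReal_le_ofReal (le_of_eq (by ring))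

end StmtFifteenHelpers5
/-- `q = ∞` case of the shadow self-improvement: for a uniform domain `Ω`
with admissible Whitney covering `W`, `0 < s < 1`, `1 ≤ p < ∞` and `f ∈ L¹_loc(Ω)`,
`(Σ_{Q∈W} ∫_Q ess sup_{y∈Sh(Q)} |f(x)−f(y)|^p/|x−y|^{sp} dx)^{1/p}` is comparable to
`(∫_Ω (ess sup_{y∈Ω} |f(x)−f(y)|/|x−y|^s)^p dx)^{1/p}`, where `Sh = Sh_{ρ_ε}` for a suitable
shadow parameter `ρ_ε > 1` depending only on `ε` and `d`. -/
theorem stmt_15 (d : ℕ) (hd : 1 ≤ d) (ε s p : ℝ) (hε : 0 < ε) (hs0 : 0 < s) (hs1 : s < 1)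
    (hp : 1 ≤ p) :
    ∃ ρ : ℝ, 1 < ρ ∧ ∃ C : ℝ≥0∞, C ≠ 0 ∧ C ≠ ⊤ ∧
      ∀ (Ω : Set (Fin d → ℝ)), IsOpen Ω → IsConnected Ω → Ω ≠ Set.univ →
      ∀ (W : WhitneyCovering d Ω), IsUniformDomain W ε →
      ∀ f : (Fin d → ℝ) → ℝ, MeasureTheory.LocallyIntegrableOn f Ω volume →
      ((∑' Q : {Q : Cube d // Q ∈ W.cubes},
          ∫⁻ x in (Q : Cube d).toSet,
            essSup (fun y => (‖f x - f y‖₊ : ℝ≥0∞) ^ p / edist x y ^ (s * p))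
              (volume.restrict (shadowSet W ρ (Q : Cube d)))) ^ (1 / p) ≤
        C * (∫⁻ x in Ω,
            essSup (fun y => (‖f x - f y‖₊ : ℝ≥0∞) ^ p / edist x y ^ (s * p))
              (volume.restrict Ω)) ^ (1 / p)) ∧
      ((∫⁻ x in Ω,
            essSup (fun y => (‖f x - f y‖₊ : ℝ≥0∞) ^ p / edist x y ^ (s * p))
              (volume.restrict Ω)) ^ (1 / p) ≤
        C * (∑' Q : {Q : Cube d // Q ∈ W.cubes},
          ∫⁻ x in (Q : Cube d).toSet,
            essSup (fun y => (‖f x - f y‖₊ : ℝ≥0∞) ^ p / edist x y ^ (s * p))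
              (volume.restrict (shadowSet W ρ (Q : Cube d)))) ^ (1 / p)) := by
  classical
  have hp0 : (0:ℝ) < p := lt_of_lt_of_le one_pos hp
  have hinv : (0:ℝ) < ε⁻¹ := inv_pos.mpr hε
  have hsp0 : (0:ℝ) ≤ s * p := le_of_lt (mul_pos hs0 hp0)
  set κ : ℝ≥0∞ := 2 ^ (p+1) * ENNReal.ofReal ((ε⁻¹ + 1) * (13 * ε⁻¹)) ^ (s * p) with hκ
  set C₂ : ℝ≥0∞ := ENNReal.ofReal ((2 * ε⁻¹) ^ d) with hC₂
  set C₃ : ℝ≥0∞ := 1 + κ * C₂ with hC₃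
  have hκtop : κ ≠ ⊤ := by
    refine ENNReal.mul_ne_top ?_ ?_
    · exact ENNReal.rpow_ne_top_of_nonneg (by linarith) (by norm_num)
    · exact ENNReal.rpow_ne_top_of_nonneg hsp0 ENNReal.ofReal_ne_top
  have hC₃top : C₃ ≠ ⊤ := by
    rw [hC₃]
    exact ENNReal.add_ne_top.mpr ⟨ENNReal.one_ne_top,
      ENNReal.mul_ne_top hκtop ENNReal.ofReal_ne_top⟩
  refine ⟨ε⁻¹ + 9, by linarith, C₃ ^ (1/p) + 1, ?_, ?_, ?_⟩
  · -- C ≠ 0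
    intro h
    exact one_ne_zero (add_eq_zero.mp h).2
  · -- C ≠ ⊤
    exact ENNReal.add_ne_top.mpr
      ⟨ENNReal.rpow_ne_top_of_nonneg (by positivity) hC₃top, ENNReal.one_ne_top⟩
  intro Ω hopen hconn huniv W hU f _hf
  haveI : Countable {Q : Cube d // Q ∈ W.cubes} := W.cubes_countable.to_subtype
  have hfr : (frontier Ω).Nonempty :=
    frontier_nonempty_of_open hd hopen hconn.nonempty huniv
  -- notation
  set ρ : ℝ := ε⁻¹ + 9 with hρdef
  set A : Cube d → ℝ≥0∞ := fun R => ∫⁻ z in R.toSet,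
    essSup (fun y => (‖f z - f y‖₊ : ℝ≥0∞) ^ p / edist z y ^ (s * p))
      (volume.restrict (shadowSet W ρ R)) with hA
  set u : (Fin d → ℝ) → ℝ≥0∞ := fun x =>
    essSup (fun y => (‖f x - f y‖₊ : ℝ≥0∞) ^ p / edist x y ^ (s * p))
      (volume.restrict Ω) with hu
  set T : ℝ≥0∞ := ∑' Q : {Q : Cube d // Q ∈ W.cubes}, A (Q : Cube d) with hT
  set B : Cube d → ℝ≥0∞ := fun Q => ∑' j : {Q : Cube d // Q ∈ W.cubes},
    if longDist Q (j : Cube d) ≤ ε⁻¹ * (j : Cube d).side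
      then A (j : Cube d) / volume (j : Cube d).toSet else 0 with hB
  -- KEY 1 (easy direction) : T ≤ ∫⁻ u
  have key1 : T ≤ ∫⁻ x in Ω, u x := by
    rw [hT]
    refine le_trans (ENNReal.tsum_le_tsum fun i => ?_) (tsum_le_lintegral_domain hd W u)
    rw [hA]
    refine lintegral_mono fun x => ?_
    rw [hu]
    exact essSup_mono_measure'
      (Measure.restrict_mono (shadowSet_subset W ρ _) le_rfl)
  -- KEY 2 (main direction) : ∫⁻ u ≤ C₃ * T
  have key2 : ∫⁻ x in Ω, u x ≤ C₃ * T := by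
    -- per-cube pointwise a.e. bound
    have hQbound : ∀ i : {Q : Cube d // Q ∈ W.cubes},
        ∀ᵐ x ∂(volume.restrict (i : Cube d).toSet),
          u x ≤ (essSup (fun y => (‖f x - f y‖₊ : ℝ≥0∞) ^ p / edist x y ^ (s * p))
            (volume.restrict (shadowSet W ρ (i : Cube d)))) + κ * B (i : Cube d) := by
      intro i
      have hper : ∀ j : {Q : Cube d // Q ∈ W.cubes},
          ∀ᵐ x ∂(volume.restrict (i : Cube d).toSet),
            essSup (fun y => (‖f x - f y‖₊ : ℝ≥0∞) ^ p / edist x y ^ (s * p))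
              (volume.restrict (j : Cube d).toSet) ≤
            (essSup (fun y => (‖f x - f y‖₊ : ℝ≥0∞) ^ p / edist x y ^ (s * p))
              (volume.restrict (shadowSet W ρ (i : Cube d)))) + κ * B (i : Cube d) := by
        intro j
        by_cases hsub : (j : Cube d).toSet ⊆
            Metric.closedBall (i : Cube d).center (ρ * (i : Cube d).side)
        · refine Filter.Eventually.of_forall fun x => ?_
          refine le_trans ?_ le_self_add
          exact essSup_mono_measure'
            (Measure.restrict_mono (subset_shadowSet W ⟨j.2, i.2, hsub⟩) le_rfl)
        · rw [hρdef] at hsub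
          obtain ⟨R, hR, hcond, hae⟩ :=
            far_pair_bound hd hε hs0 hp hopen W hU hfr f i.2 j.2 hsub
          filter_upwards [hae] with x hx
          refine le_trans hx (le_trans ?_ le_add_self)
          rw [hκ]
          refine mul_le_mul_right ?_ _
          have hle := ENNReal.le_tsum (a := ⟨R, hR⟩)
            (f := fun j : {Q : Cube d // Q ∈ W.cubes} =>
              if longDist (i : Cube d) (j : Cube d) ≤ ε⁻¹ * (j : Cube d).side
                then A (j : Cube d) / volume (j : Cube d).toSet else 0)
          rw [if_pos hcond] at hle
          rw [hB, hA] at *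
          exact hle
      filter_upwards [(MeasureTheory.ae_all_iff).mpr hper] with x hx
      rw [hu]
      exact essSup_restrict_domain_le W hopen _ hx
    -- integrate over each cube
    have hstep2 : ∀ i : {Q : Cube d // Q ∈ W.cubes},
        ∫⁻ x in (i : Cube d).toSet, u x ≤
          A (i : Cube d) + (κ * B (i : Cube d)) * volume (i : Cube d).toSet := by
      intro i
      calc ∫⁻ x in (i : Cube d).toSet, u x
          ≤ ∫⁻ x in (i : Cube d).toSet,
            ((essSup (fun y => (‖f x - f y‖₊ : ℝ≥0∞) ^ p / edist x y ^ (s * p))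
              (volume.restrict (shadowSet W ρ (i : Cube d)))) + κ * B (i : Cube d)) :=
            lintegral_mono_ae (hQbound i)
        _ = A (i : Cube d) + (κ * B (i : Cube d)) * volume (i : Cube d).toSet := by
            rw [lintegral_add_right _ measurable_const, lintegral_const,
              Measure.restrict_apply_univ, hA]
    -- double sum manipulation
    have hdouble : (∑' i : {Q : Cube d // Q ∈ W.cubes},
        (κ * B (i : Cube d)) * volume (i : Cube d).toSet) ≤ κ * C₂ * T := by
      have hswap : (∑' i : {Q : Cube d // Q ∈ W.cubes},
          B (i : Cube d) * volume (i : Cube d).toSet) ≤ C₂ * T := by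
        have h1 : ∀ i : {Q : Cube d // Q ∈ W.cubes},
            B (i : Cube d) * volume (i : Cube d).toSet =
            ∑' j : {Q : Cube d // Q ∈ W.cubes},
              (if longDist (i : Cube d) (j : Cube d) ≤ ε⁻¹ * (j : Cube d).side
                then A (j : Cube d) / volume (j : Cube d).toSet else 0) *
                volume (i : Cube d).toSet := by
          intro i
          rw [hB, ENNReal.tsum_mul_right]
        calc (∑' i : {Q : Cube d // Q ∈ W.cubes},
            B (i : Cube d) * volume (i : Cube d).toSet)
            = ∑' (i : {Q : Cube d // Q ∈ W.cubes}) (j : {Q : Cube d // Q ∈ W.cubes}),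
              (if longDist (i : Cube d) (j : Cube d) ≤ ε⁻¹ * (j : Cube d).side
                then A (j : Cube d) / volume (j : Cube d).toSet else 0) *
                volume (i : Cube d).toSet := by
              congr 1
              funext i
              exact h1 i
          _ = ∑' (j : {Q : Cube d // Q ∈ W.cubes}) (i : {Q : Cube d // Q ∈ W.cubes}),
              (if longDist (i : Cube d) (j : Cube d) ≤ ε⁻¹ * (j : Cube d).side
                then A (j : Cube d) / volume (j : Cube d).toSet else 0) *
                volume (i : Cube d).toSet := ENNReal.tsum_comm
          _ ≤ ∑' j : {Q : Cube d // Q ∈ W.cubes}, C₂ * A (j : Cube d) := by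
              refine ENNReal.tsum_le_tsum fun j => ?_
              have hfac : ∀ i : {Q : Cube d // Q ∈ W.cubes},
                  (if longDist (i : Cube d) (j : Cube d) ≤ ε⁻¹ * (j : Cube d).side
                    then A (j : Cube d) / volume (j : Cube d).toSet else 0) *
                    volume (i : Cube d).toSet =
                  (A (j : Cube d) / volume (j : Cube d).toSet) *
                    (if longDist (i : Cube d) (j : Cube d) ≤ ε⁻¹ * (j : Cube d).side
                      then volume (i : Cube d).toSet else 0) := by
                intro i
                split_ifs
                · ring
                · simp
              calc (∑' i : {Q : Cube d // Q ∈ W.cubes},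
                  (if longDist (i : Cube d) (j : Cube d) ≤ ε⁻¹ * (j : Cube d).side
                    then A (j : Cube d) / volume (j : Cube d).toSet else 0) *
                    volume (i : Cube d).toSet)
                  = (A (j : Cube d) / volume (j : Cube d).toSet) *
                    ∑' i : {Q : Cube d // Q ∈ W.cubes},
                      (if longDist (i : Cube d) (j : Cube d) ≤ ε⁻¹ * (j : Cube d).side
                        then volume (i : Cube d).toSet else 0) := by
                    rw [← ENNReal.tsum_mul_left]
                    congr 1
                    funext i
                    exact hfac i
                _ ≤ (A (j : Cube d) / volume (j : Cube d).toSet) *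
                    (C₂ * volume (j : Cube d).toSet) := by
                    refine mul_le_mul_right ?_ _
                    rw [hC₂]
                    exact whitney_counting hd W hinv (j : Cube d)
                _ = C₂ * ((A (j : Cube d) / volume (j : Cube d).toSet) *
                    volume (j : Cube d).toSet) := by ring
                _ = C₂ * A (j : Cube d) := by
                    rw [ENNReal.div_mul_cancel (j : Cube d).volume_ne_zero
                      (j : Cube d).volume_ne_top]
          _ = C₂ * T := by rw [ENNReal.tsum_mul_left, hT]
      calc (∑' i : {Q : Cube d // Q ∈ W.cubes},
          (κ * B (i : Cube d)) * volume (i : Cube d).toSet)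
          = κ * ∑' i : {Q : Cube d // Q ∈ W.cubes},
            B (i : Cube d) * volume (i : Cube d).toSet := by
            rw [← ENNReal.tsum_mul_left]
            congr 1
            funext i
            rw [mul_assoc]
        _ ≤ κ * (C₂ * T) := mul_le_mul_right hswap _
        _ = κ * C₂ * T := by rw [hκ]; ring
    calc ∫⁻ x in Ω, u x
        ≤ ∑' i : {Q : Cube d // Q ∈ W.cubes}, ∫⁻ x in (i : Cube d).toSet, u x :=
          lintegral_domain_le_tsum W hopen u
      _ ≤ ∑' i : {Q : Cube d // Q ∈ W.cubes},
          (A (i : Cube d) + (κ * B (i : Cube d)) * volume (i : Cube d).toSet) :=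
          ENNReal.tsum_le_tsum hstep2
      _ = T + ∑' i : {Q : Cube d // Q ∈ W.cubes},
          (κ * B (i : Cube d)) * volume (i : Cube d).toSet := by
          rw [ENNReal.tsum_add, hT]
      _ ≤ T + κ * C₂ * T := add_le_add_right hdouble T
      _ = C₃ * T := by rw [hC₃]; ring
  -- final assembly
  have h1p : (0:ℝ) ≤ 1 / p := by positivity
  constructor
  · calc (∑' Q : {Q : Cube d // Q ∈ W.cubes},
        ∫⁻ x in (Q : Cube d).toSet,
          essSup (fun y => (‖f x - f y‖₊ : ℝ≥0∞) ^ p / edist x y ^ (s * p))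
            (volume.restrict (shadowSet W ρ (Q : Cube d)))) ^ (1 / p)
        = T ^ (1 / p) := by rw [hT, hA]
      _ ≤ (∫⁻ x in Ω, u x) ^ (1 / p) := ENNReal.rpow_le_rpow key1 h1p
      _ ≤ (C₃ ^ (1/p) + 1) * (∫⁻ x in Ω, u x) ^ (1 / p) :=
          le_mul_of_one_le_left zero_le le_add_self
      _ = (C₃ ^ (1/p) + 1) * (∫⁻ x in Ω,
          essSup (fun y => (‖f x - f y‖₊ : ℝ≥0∞) ^ p / edist x y ^ (s * p))
            (volume.restrict Ω)) ^ (1 / p) := by rw [hu]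
  · calc (∫⁻ x in Ω,
        essSup (fun y => (‖f x - f y‖₊ : ℝ≥0∞) ^ p / edist x y ^ (s * p))
          (volume.restrict Ω)) ^ (1 / p)
        = (∫⁻ x in Ω, u x) ^ (1 / p) := by rw [hu]
      _ ≤ (C₃ * T) ^ (1 / p) := ENNReal.rpow_le_rpow key2 h1p
      _ = C₃ ^ (1 / p) * T ^ (1 / p) := ENNReal.mul_rpow_of_nonneg _ _ h1p
      _ ≤ (C₃ ^ (1/p) + 1) * T ^ (1 / p) := mul_le_mul_left le_self_add _
      _ = (C₃ ^ (1/p) + 1) * (∑' Q : {Q : Cube d // Q ∈ W.cubes},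
          ∫⁻ x in (Q : Cube d).toSet,
            essSup (fun y => (‖f x - f y‖₊ : ℝ≥0∞) ^ p / edist x y ^ (s * p))
              (volume.restrict (shadowSet W ρ (Q : Cube d)))) ^ (1 / p) := by rw [hT, hA]
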